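/- arXiv:gr-qc/0606113 — 4 statements merged into one kernel-verified Lean document; each statement's English description precedes it below -/
import Mathlib

section
/- If f : [t₀,∞) → ℝ is C¹ with f square-integrable (∫ f² < ∞) and deriv f bounded, then f(t) → 0 as t → ∞. -/
open MeasureTheory

/-- A C¹ function on `[t₀,∞)` which is square-integrable and has
bounded derivative tends to `0` at infinity. -/
theorem sq_integrable_bounded_deriv_tendsto_zero (t₀ : ℝ) (f : ℝ → ℝ)
    (hf : ContDiffOn ℝ 1 f (Set.Ici t₀))
    (hint : IntegrableOn (fun t => (f t) ^ 2) (Set.Ici t₀))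
    (hbd : ∃ M : ℝ, ∀ t, t₀ ≤ t → |deriv f t| ≤ M) :
    Filter.Tendsto f Filter.atTop (nhds 0) := by
  obtain ⟨M₀, hM₀⟩ := hbd
  set M : ℝ := max M₀ 1 with hMdef
  have hMpos : (0:ℝ) < M := lt_of_lt_of_le one_pos (le_max_right _ _)
  have hdiff : ∀ x ∈ Set.Ioi t₀, DifferentiableAt ℝ f x := fun x hx =>
    (hf.differentiableOn one_ne_zero).differentiableAt (Ici_mem_nhds hx)
  have hbound : ∀ x ∈ Set.Ioi t₀, ‖deriv f x‖ ≤ M := fun x hx => by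
    rw [Real.norm_eq_abs]
    exact (hM₀ x (le_of_lt hx)).trans (le_max_left _ _)
  have hlip : ∀ x ∈ Set.Ioi t₀, ∀ y ∈ Set.Ioi t₀, ‖f y - f x‖ ≤ M * ‖y - x‖ :=
    fun x hx y hy =>
      (convex_Ioi t₀).norm_image_sub_le_of_norm_deriv_le hdiff hbound hx hy
  by_contra hcon
  rw [Metric.tendsto_atTop] at hcon
  push_neg at hcon
  obtain ⟨ε, hε, hfreq⟩ := hcon
  set δ : ℝ := ε / (2 * M) with hδdef
  have hδpos : 0 < δ := div_pos hε (by positivity)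
  set c : ℝ := δ * (ε / 2) ^ 2 with hcdef
  have hcpos : 0 < c := by positivity
  -- interval integrability of f² on subintervals of [t₀, ∞)
  have hii : ∀ a b : ℝ, t₀ ≤ a → t₀ ≤ b →
      IntervalIntegrable (fun t => (f t) ^ 2) volume a b := by
    intro a b ha hb
    apply MeasureTheory.IntegrableOn.intervalIntegrable
    apply hint.mono_set
    intro x hx
    rcases Set.mem_uIcc.mp hx with h | h
    · exact le_trans ha h.1
    · exact le_trans hb h.1
  -- on each interval [t, t+δ] with |f t| ≥ ε, the integral of f² is at least c
  have key : ∀ t : ℝ, t₀ + 1 ≤ t → ε ≤ |f t| →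
      c ≤ ∫ x in t..(t + δ), (f x) ^ 2 := by
    intro t ht hft
    have ht' : t₀ ≤ t := by linarith
    have hle : t ≤ t + δ := by linarith
    have hlow : ∀ x ∈ Set.Icc t (t + δ), (ε / 2) ^ 2 ≤ (f x) ^ 2 := by
      intro x hx
      have hx1 : t₀ < x := by linarith [hx.1]
      have hxt : |x - t| ≤ δ := by
        rw [abs_of_nonneg (by linarith [hx.1])]
        linarith [hx.2]
      have hdiffle : |f x - f t| ≤ ε / 2 := by
        have := hlip t (by simp; linarith) x (by simpa using hx1)
        rw [Real.norm_eq_abs, Real.norm_eq_abs] at this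
        calc |f x - f t| ≤ M * |x - t| := this
          _ ≤ M * δ := by nlinarith [abs_nonneg (x - t)]
          _ = ε / 2 := by field_simp [hδdef]; rw [hδdef]; field_simp
      have h2 : ε / 2 ≤ |f x| := by
        have := abs_sub_abs_le_abs_sub (f x) (f t)
        have h3 := abs_sub_abs_le_abs_sub (f t) (f x)
        rw [abs_sub_comm] at h3
        linarith
      calc (ε / 2) ^ 2 ≤ |f x| ^ 2 := by
            apply pow_le_pow_left₀ (by linarith) h2
        _ = (f x) ^ 2 := by rw [sq_abs]
    have hmono := intervalIntegral.integral_mono_on hle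
      (intervalIntegrable_const (c := (ε / 2) ^ 2))
      (hii t (t + δ) ht' (by linarith)) hlow
    have hconst : (∫ _x in t..(t + δ), (ε / 2) ^ 2) = c := by
      rw [intervalIntegral.integral_const, smul_eq_mul]
      ring_nf
      rw [hcdef]; ring
    linarith [hmono, hconst.symm.le]
  -- the function b ↦ ∫_{t₀}^{b} f² converges; derive a contradiction
  set L : ℝ := ∫ x in Set.Ioi t₀, (f x) ^ 2 with hLdef
  have htend : Filter.Tendsto (fun b => ∫ x in t₀..b, (f x) ^ 2)
      Filter.atTop (nhds L) :=
    MeasureTheory.intervalIntegral_tendsto_integral_Ioi t₀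
      (hint.mono_set Set.Ioi_subset_Ici_self) Filter.tendsto_id
  obtain ⟨B, hB⟩ := (Metric.tendsto_atTop.mp htend) (c / 2) (half_pos hcpos)
  obtain ⟨t, ht, hft⟩ := hfreq (max B (t₀ + 1))
  have htB : B ≤ t := le_trans (le_max_left _ _) ht
  have ht1 : t₀ + 1 ≤ t := le_trans (le_max_right _ _) ht
  have hft' : ε ≤ |f t| := by
    rw [Real.dist_eq, sub_zero] at hft
    linarith
  have hkey := key t ht1 hft'
  have hsplit : (∫ x in t₀..t, (f x) ^ 2) + (∫ x in t..(t + δ), (f x) ^ 2)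
      = ∫ x in t₀..(t + δ), (f x) ^ 2 :=
    intervalIntegral.integral_add_adjacent_intervals
      (hii t₀ t le_rfl (by linarith)) (hii t (t + δ) (by linarith) (by linarith))
  have h1 := hB t htB
  have h2 := hB (t + δ) (by linarith)
  rw [Real.dist_eq] at h1 h2
  have h1' := abs_lt.mp h1
  have h2' := abs_lt.mp h2
  linarith [h1'.1, h1'.2, h2'.1, h2'.2]
end

section
/- Let φ : [t₀,∞) → ℝ be C¹ with deriv φ not integrable (∫ₜ₀^∞ |deriv φ| = ∞), and let W : [t₀,∞) → ℝ be C¹ with W ≥ 1. Fix δ > 1 and ε > 0, and suppose that on every subinterval L ⊆ [T,∞) on which W ≥ δ holds, one has deriv W ≤ -ε·|deriv φ|·W. Then limsup_{t→∞} W(t) ≤ δ. -/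
open Filter MeasureTheory

/-- If `|φ'|` is not integrable on `[t₀,∞)`, `W ≥ 1` is C¹, and wherever
`W ≥ δ` (with `δ > 1`) one has `W' ≤ -ε |φ'| W`, then `limsup W ≤ δ`. -/
theorem limsup_W_le (t₀ δ ε : ℝ) (φ W : ℝ → ℝ)
    (hφ : ContDiffOn ℝ 1 φ (Set.Ici t₀))
    (hW : ContDiffOn ℝ 1 W (Set.Ici t₀))
    (hnonint : ¬ IntegrableOn (fun t => |deriv φ t|) (Set.Ici t₀))
    (hW1 : ∀ t, t₀ ≤ t → 1 ≤ W t)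
    (hδ : 1 < δ) (hε : 0 < ε)
    (hdecay : ∀ t, t₀ ≤ t → δ ≤ W t → deriv W t ≤ -ε * |deriv φ t| * W t) :
    Filter.limsup W Filter.atTop ≤ δ := by
  have hWc : ContinuousOn W (Set.Ici t₀) := hW.continuousOn
  -- continuity of `deriv φ` on the open set `Ioi t₀`
  have hdW : ContinuousOn (derivWithin φ (Set.Ici t₀)) (Set.Ici t₀) :=
    hφ.continuousOn_derivWithin (uniqueDiffOn_Ici t₀) le_rfl
  have hφd : ContinuousOn (deriv φ) (Set.Ioi t₀) := by
    refine (hdW.mono Set.Ioi_subset_Ici_self).congr ?_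
    intro x hx
    exact (derivWithin_of_mem_nhds (Ici_mem_nhds hx)).symm
  have habs : ContinuousOn (fun t => |deriv φ t|) (Set.Ioi t₀) := hφd.abs
  -- differentiability of W at interior points
  have hWdiff : ∀ x, t₀ < x → DifferentiableAt ℝ W x := fun x hx =>
    ((hW.differentiableOn one_ne_zero).differentiableAt (Ici_mem_nhds hx))
  -- key monotonicity lemma: where `W ≥ δ` on the open interval, `W` does not increase
  have mono2 : ∀ a b, t₀ ≤ a → a ≤ b → (∀ x ∈ Set.Ioo a b, δ ≤ W x) → W b ≤ W a := by
    intro a b ha hab hδW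
    have hanti : AntitoneOn W (Set.Icc a b) := by
      have hint : interior (Set.Icc a b) = Set.Ioo a b := interior_Icc
      refine antitoneOn_of_deriv_nonpos (convex_Icc a b)
        (hWc.mono (fun x hx => le_trans ha hx.1)) ?_ ?_
      · intro x hx
        rw [hint] at hx
        exact (hWdiff x (lt_of_le_of_lt ha hx.1)).differentiableWithinAt
      · intro x hx
        rw [hint] at hx
        have hx0 : t₀ ≤ x := le_trans ha hx.1.le
        have h1 := hdecay x hx0 (hδW x hx)
        have h2 : 0 ≤ ε * |deriv φ x| * W x := by
          have := abs_nonneg (deriv φ x)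
          have := hW1 x hx0
          positivity
        linarith
    exact hanti ⟨le_refl a, hab⟩ ⟨hab, le_refl b⟩ hab
  by_cases hcase : ∃ T, t₀ ≤ T ∧ ∀ t, T ≤ t → δ ≤ W t
  · -- Case 1: eventually W ≥ δ everywhere; contradicts non-integrability
    exfalso
    obtain ⟨T, hT0, hTδ⟩ := hcase
    set T' : ℝ := T + 1 with hT'
    have hT'0 : t₀ < T' := lt_of_le_of_lt hT0 (by linarith)
    have hT'δ : ∀ t, T' ≤ t → δ ≤ W t := fun t ht => hTδ t (by linarith)
    -- interval integrability of |φ'| on subintervals of (t₀, ∞)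
    have hii : ∀ x y, t₀ < x → t₀ < y →
        IntervalIntegrable (fun t => |deriv φ t|) volume x y := by
      intro x y hx hy
      refine (habs.mono ?_).intervalIntegrable
      intro z hz
      exact lt_of_lt_of_le (lt_min hx hy) hz.1
    -- the primitive of |φ'|
    set G : ℝ → ℝ := fun t => ∫ s in T'..t, |deriv φ s| with hG
    have hGderiv : ∀ x, t₀ < x → HasDerivAt G (|deriv φ x|) x := by
      intro x hx
      refine intervalIntegral.integral_hasDerivAt_right (hii T' x hT'0 hx) ?_ ?_
      · exact AEStronglyMeasurable.stronglyMeasurableAtFilter_of_mem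
          (habs.aestronglyMeasurable measurableSet_Ioi) (Ioi_mem_nhds hx)
      · exact habs.continuousAt (Ioi_mem_nhds hx)
    set g : ℝ → ℝ := fun t => W t + ε * G t with hg
    have hganti : AntitoneOn g (Set.Ici T') := by
      refine antitoneOn_of_deriv_nonpos (convex_Ici T') ?_ ?_ ?_
      · intro x hx
        have hx0 : t₀ < x := lt_of_lt_of_le hT'0 hx
        exact ((hWdiff x hx0).continuousAt.add
          ((hGderiv x hx0).continuousAt.const_smul ε)).continuousWithinAt
      · intro x hx
        rw [interior_Ici] at hx
        have hx0 : t₀ < x := lt_trans hT'0 hx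
        exact ((hWdiff x hx0).add
          (((hGderiv x hx0).const_mul ε).differentiableAt)).differentiableWithinAt
      · intro x hx
        rw [interior_Ici] at hx
        have hx0 : t₀ < x := lt_trans hT'0 hx
        have hder : HasDerivAt g (deriv W x + ε * |deriv φ x|) x :=
          ((hWdiff x hx0).hasDerivAt).add ((hGderiv x hx0).const_mul ε)
        rw [hder.deriv]
        have h1 := hdecay x hx0.le (hT'δ x hx.le)
        have h2 : 1 ≤ W x := hW1 x hx0.le
        have h3 : 0 ≤ |deriv φ x| := abs_nonneg _
        nlinarith [mul_nonneg (mul_nonneg hε.le h3) (sub_nonneg.2 h2)]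
    -- uniform bound on the interval integrals
    have hbound : ∀ t, T' ≤ t → (∫ s in T'..t, |deriv φ s|) ≤ (W T' - 1) / ε := by
      intro t ht
      have hmono : W t + ε * G t ≤ W T' + ε * G T' := hganti (Set.self_mem_Ici) ht ht
      have hG0 : G T' = 0 := intervalIntegral.integral_same
      have h1 : 1 ≤ W t := hW1 t (le_trans hT'0.le ht)
      rw [hG0] at hmono
      show G t ≤ (W T' - 1) / ε
      rw [le_div_iff₀ hε]
      nlinarith
    -- hence |φ'| is integrable on (T', ∞)
    have hint1 : IntegrableOn (fun t => |deriv φ t|) (Set.Ioi T') := by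
      refine integrableOn_Ioi_of_intervalIntegral_norm_bounded ((W T' - 1) / ε) T'
        (f := fun t => |deriv φ t|) (b := fun n : ℕ => T' + n) (l := atTop)
        ?_ ?_ ?_
      · intro i
        exact (hii T' (T' + i) hT'0
          (lt_of_lt_of_le hT'0 (le_add_of_nonneg_right (Nat.cast_nonneg i)))).1
      · exact tendsto_atTop_add_const_left _ _ tendsto_natCast_atTop_atTop
      · refine Eventually.of_forall fun n => ?_
        simp_rw [Real.norm_eq_abs, abs_abs]
        exact hbound _ (le_add_of_nonneg_right (Nat.cast_nonneg n))
    -- and on [t₀, T'] by continuity (up to a null set)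
    have hint2 : IntegrableOn (fun t => |deriv φ t|) (Set.Icc t₀ T') := by
      have hint2' : IntegrableOn (fun t => |derivWithin φ (Set.Ici t₀) t|)
          (Set.Icc t₀ T') := by
        exact (hdW.abs.mono (fun x hx => hx.1)).integrableOn_compact isCompact_Icc
      refine hint2'.congr_fun_ae ?_
      have hnull : (volume : Measure ℝ) {t₀} = 0 := measure_singleton t₀
      rw [Filter.EventuallyEq, ae_restrict_iff' measurableSet_Icc]
      refine Filter.eventually_of_mem (compl_mem_ae_iff.2 hnull) ?_
      intro x hx hx'
      have hxx : x ≠ t₀ := hx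
      have : t₀ < x := lt_of_le_of_ne hx'.1 (Ne.symm hxx)
      rw [derivWithin_of_mem_nhds (Ici_mem_nhds this)]
    exact hnonint (by
      have : Set.Ici t₀ = Set.Icc t₀ T' ∪ Set.Ioi T' := (Set.Icc_union_Ioi_eq_Ici hT'0.le).symm
      rw [this]
      exact hint2.union hint1)
  · -- Case 2: there are arbitrarily large times where W < δ; then W ≤ δ from some point on
    push_neg at hcase
    obtain ⟨s, hs0, hsδ⟩ := hcase t₀ le_rfl
    have hall : ∀ t, s ≤ t → W t ≤ δ := by
      intro t ht
      by_contra h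
      push_neg at h
      set S : Set ℝ := {r ∈ Set.Icc s t | W r ≤ δ} with hS
      have hSne : S.Nonempty := ⟨s, ⟨le_refl s, ht⟩, hsδ.le⟩
      have hSbdd : BddAbove S := ⟨t, fun r hr => hr.1.2⟩
      have hSclosed : IsClosed S := by
        have : S = Set.Icc s t ∩ W ⁻¹' Set.Iic δ := by
          ext r; simp [hS, Set.mem_Icc, and_assoc]
        rw [this]
        exact (hWc.mono (fun x hx => le_trans hs0 hx.1)).preimage_isClosed_of_isClosed
          isClosed_Icc isClosed_Iic
      set u := sSup S with hu
      have huS : u ∈ S := hSclosed.csSup_mem hSne hSbdd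
      have hus : s ≤ u := huS.1.1
      have hut : u ≤ t := huS.1.2
      have huδ : W u ≤ δ := huS.2
      have hmid : ∀ x ∈ Set.Ioo u t, δ ≤ W x := by
        intro x hx
        by_contra hxδ
        push_neg at hxδ
        have : x ∈ S := ⟨⟨le_trans hus hx.1.le, hx.2.le⟩, hxδ.le⟩
        exact absurd (le_csSup hSbdd this) (not_le.2 hx.1)
      have := mono2 u t (le_trans hs0 hus) hut hmid
      linarith
    have hcb : IsCoboundedUnder (· ≤ ·) atTop W :=
      isCoboundedUnder_le_of_eventually_le atTop
        (x := 1) (by filter_upwards [eventually_ge_atTop t₀] with t ht; exact hW1 t ht)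
    refine limsup_le_of_le hcb ?_
    filter_upwards [eventually_ge_atTop s] with t ht
    exact hall t ht
end

section
/- Let n ≥ 3 be an integer and 0 < α < 2/√(n(n-1)). Then (1 - (1/2)·√((n-1)/n)·α)^{-1} < n/(n-1). Consequently, if W : [t₀,∞) → ℝ satisfies limsup_{t→∞} W(t) ≤ (1 - (1/2)√((n-1)/n)·α)^{-1} and the deceleration parameter satisfies q(t) ≤ n(1 - 1/W(t)) - 1 with W(t) ≥ 1, then q(t) < 0 for all sufficiently large t. -/
open Filter

/-- For `n ≥ 3` and `0 < α < 2/√(n(n-1))` one has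
`(1 - (1/2)√((n-1)/n) α)⁻¹ < n/(n-1)`; consequently if `limsup W ≤ (1 - (1/2)√((n-1)/n) α)⁻¹`
(in the extended reals), `W ≥ 1` and `q ≤ n(1 - 1/W) - 1` pointwise, then `q < 0`
for all sufficiently large times. -/
theorem intermediate_acceleration (n : ℕ) (hn : 3 ≤ n) (α : ℝ)
    (hα0 : 0 < α) (hα : α < 2 / Real.sqrt ((n : ℝ) * ((n : ℝ) - 1))) :
    (1 - (1 / 2) * Real.sqrt (((n : ℝ) - 1) / n) * α)⁻¹ < (n : ℝ) / ((n : ℝ) - 1) ∧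
    ∀ (W q : ℝ → ℝ),
      Filter.limsup (fun t => (W t : EReal)) Filter.atTop ≤
        (((1 - (1 / 2) * Real.sqrt (((n : ℝ) - 1) / n) * α)⁻¹ : ℝ) : EReal) →
      (∀ t, 1 ≤ W t ∧ q t ≤ (n : ℝ) * (1 - 1 / W t) - 1) →
      ∀ᶠ t in Filter.atTop, q t < 0 := by
  have hn1 : (1 : ℝ) < (n : ℝ) := by
    have : (3 : ℝ) ≤ (n : ℝ) := by exact_mod_cast hn
    linarith
  have hn0 : (0 : ℝ) < (n : ℝ) := by linarith
  set s := Real.sqrt (((n : ℝ) - 1) / n) with hs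
  have hs0 : 0 < s := Real.sqrt_pos.mpr (div_pos (by linarith) hn0)
  have hsrel : Real.sqrt ((n : ℝ) * ((n : ℝ) - 1)) = (n : ℝ) * s := by
    have hsq : ((n : ℝ) * s) ^ 2 = (n : ℝ) * ((n : ℝ) - 1) := by
      rw [hs, mul_pow, Real.sq_sqrt (div_pos (by linarith) hn0).le]
      field_simp
    rw [← hsq, Real.sqrt_sq (by positivity)]
  have hαs : α < 2 / ((n : ℝ) * s) := by rwa [hsrel] at hα
  have h1 : α * ((n : ℝ) * s) < 2 := (lt_div_iff₀ (by positivity)).mp hαs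
  have key2 : (n : ℝ) * ((1 / 2) * s * α) < 1 := by nlinarith
  have hden : (n : ℝ) - 1 < (n : ℝ) * (1 - (1 / 2) * s * α) := by nlinarith
  have hpos : 0 < 1 - (1 / 2) * s * α := by nlinarith
  have main : (1 - (1 / 2) * s * α)⁻¹ < (n : ℝ) / ((n : ℝ) - 1) := by
    rw [inv_eq_one_div, div_lt_div_iff₀ hpos (by linarith)]
    nlinarith
  refine ⟨main, ?_⟩
  intro W q hlim hWq
  have hlim2 : Filter.limsup (fun t => (W t : EReal)) Filter.atTop <
      (((n : ℝ) / ((n : ℝ) - 1) : ℝ) : EReal) :=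
    lt_of_le_of_lt hlim (by exact_mod_cast main)
  have hev := Filter.eventually_lt_of_limsup_lt hlim2
  filter_upwards [hev] with t ht
  have hWlt : W t < (n : ℝ) / ((n : ℝ) - 1) := by exact_mod_cast ht
  obtain ⟨hW1, hq⟩ := hWq t
  have hW0 : 0 < W t := by linarith
  have hinv : 1 - 1 / W t < 1 / (n : ℝ) := by
    rw [sub_lt_iff_lt_add]
    have h1 : ((n : ℝ) - 1) / (n : ℝ) < 1 / W t := by
      rw [div_lt_div_iff₀ hn0 hW0]
      have := (mul_lt_mul_of_pos_left hWlt (by linarith : (0:ℝ) < (n:ℝ) - 1))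
      rw [mul_div_cancel₀ _ (by linarith : (n:ℝ) - 1 ≠ 0)] at this
      linarith
    have h2 : 1 - 1 / (n : ℝ) = ((n : ℝ) - 1) / (n : ℝ) := by field_simp
    linarith
  calc q t ≤ (n : ℝ) * (1 - 1 / W t) - 1 := hq
    _ < (n : ℝ) * (1 / (n : ℝ)) - 1 := by nlinarith
    _ = 0 := by field_simp; norm_num
end

section
/- Let V : J → ℝ be positive and C¹, φ : [t₀,∞) → J continuous with V(φ(t)) → V_∞ > 0 and such that V' extends continuously to the closure of J in the extended reals. Then V'(φ(t)) converges in the extended reals as t → ∞. -/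
open Filter

/-- Let `V` be positive and C¹ on the interval `J = (a,b)` (with
`a, b` extended reals), `φ` continuous on `[t₀,∞)` with values in `J`,
`V(φ(t)) → V_∞ > 0`, and suppose `V'` extends continuously (with extended-real
values) to the closure of `J` in the extended reals. Then `V'(φ(t))` converges
in the extended reals as `t → ∞`. -/
theorem derivV_converges (t₀ Vinf : ℝ) (a b : EReal) (hab : a < b)
    (V φ : ℝ → ℝ)
    (J : Set ℝ) (hJ : J = {x : ℝ | a < (x : EReal) ∧ (x : EReal) < b})
    (hV : ContDiffOn ℝ 1 V J) (hVpos : ∀ x ∈ J, 0 < V x)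
    (hφc : ContinuousOn φ (Set.Ici t₀)) (hφJ : ∀ t, t₀ ≤ t → φ t ∈ J)
    (hlim : Filter.Tendsto (fun t => V (φ t)) Filter.atTop (nhds Vinf))
    (hVinf : 0 < Vinf)
    (Ve : EReal → EReal)
    (hVe_cont : ContinuousOn Ve (Set.Icc a b))
    (hVe_eq : ∀ x : ℝ, x ∈ J → Ve (x : EReal) = ((deriv V x : ℝ) : EReal)) :
    ∃ L : EReal,
      Filter.Tendsto (fun t => ((deriv V (φ t) : ℝ) : EReal)) Filter.atTop (nhds L) := by
  set f : ℝ → EReal := fun t => ((deriv V (φ t) : ℝ) : EReal) with hf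
  set ψ : ℝ → EReal := fun t => ((φ t : ℝ) : EReal) with hψ
  have hψIcc : ∀ t, t₀ ≤ t → ψ t ∈ Set.Icc a b := by
    intro t ht
    have := hφJ t ht
    rw [hJ] at this
    exact ⟨le_of_lt this.1, le_of_lt this.2⟩
  -- Step A: every cluster point of f is Ve c for some cluster point c of ψ in Icc a b
  have key : ∀ L : EReal, MapClusterPt L atTop f →
      ∃ c ∈ Set.Icc a b, L = Ve c ∧ MapClusterPt c atTop ψ := by
    intro L hL
    rw [mapClusterPt_iff_ultrafilter] at hL
    obtain ⟨U, hU, hfU⟩ := hL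
    obtain ⟨c, -, hc⟩ := isCompact_univ.ultrafilter_le_nhds (U.map ψ) (by simp)
    have hcT : Tendsto ψ U (nhds c) := hc
    have hev : ∀ᶠ t in (U : Filter ℝ), t₀ ≤ t := hU (eventually_ge_atTop t₀)
    have hcIcc : c ∈ Set.Icc a b :=
      isClosed_Icc.mem_of_tendsto hcT (hev.mono fun t ht => hψIcc t ht)
    have hVec : Tendsto (fun t => Ve (ψ t)) U (nhds (Ve c)) := by
      apply (hVe_cont c hcIcc).tendsto.comp
      rw [tendsto_nhdsWithin_iff]
      exact ⟨hcT, hev.mono fun t ht => hψIcc t ht⟩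
    have heq : ∀ᶠ t in (U : Filter ℝ), Ve (ψ t) = f t := by
      refine hev.mono fun t ht => ?_
      exact hVe_eq (φ t) (hφJ t ht)
    have : Tendsto f U (nhds (Ve c)) := hVec.congr' heq
    exact ⟨c, hcIcc, tendsto_nhds_unique hfU this,
      mapClusterPt_iff_ultrafilter.mpr ⟨U, hU, hcT⟩⟩
  -- Step B: if c₁ < c₂ are both cluster points of ψ, then Ve c₁ = 0
  have stepB : ∀ c₁ c₂ : EReal, c₁ ∈ Set.Icc a b → c₂ ∈ Set.Icc a b →
      MapClusterPt c₁ atTop ψ → MapClusterPt c₂ atTop ψ → c₁ < c₂ → Ve c₁ = 0 ∧ Ve c₂ = 0 := by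
    intro c₁ c₂ h1I h2I h1 h2 h12
    -- every real strictly between c₁ and c₂ is attained frequently
    have hfreq : ∀ x : ℝ, c₁ < (x : EReal) → (x : EReal) < c₂ →
        ∃ᶠ t in atTop, φ t = x := by
      intro x hx1 hx2
      rw [frequently_atTop]
      intro T
      set T' := max T t₀ with hT'
      have h1' := (mapClusterPt_iff_frequently.mp h1) (Set.Iio (x : EReal))
        (IsOpen.mem_nhds isOpen_Iio hx1)
      have h2' := (mapClusterPt_iff_frequently.mp h2) (Set.Ioi (x : EReal))
        (IsOpen.mem_nhds isOpen_Ioi hx2)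
      obtain ⟨t₁, ht₁T, ht₁⟩ := (frequently_atTop.mp h1') T'
      obtain ⟨t₂, ht₂T, ht₂⟩ := (frequently_atTop.mp h2') T'
      have hlt₁ : φ t₁ < x := by
        have : (φ t₁ : EReal) < (x : EReal) := ht₁
        exact_mod_cast this
      have hlt₂ : x < φ t₂ := by
        have : (x : EReal) < (φ t₂ : EReal) := ht₂
        exact_mod_cast this
      have hsub : Set.uIcc t₁ t₂ ⊆ Set.Ici t₀ := by
        intro s hs
        have := hs.1
        have hmin : t₀ ≤ min t₁ t₂ := le_min (le_trans (le_max_right T t₀) ht₁T)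
          (le_trans (le_max_right T t₀) ht₂T)
        exact le_trans hmin (by simpa [Set.uIcc] using hs.1)
      have hIVT := intermediate_value_uIcc (hφc.mono hsub)
      have hxmem : x ∈ Set.uIcc (φ t₁) (φ t₂) := by
        rw [Set.mem_uIcc]
        exact Or.inl ⟨le_of_lt hlt₁, le_of_lt hlt₂⟩
      obtain ⟨s, hs, hsx⟩ := hIVT hxmem
      refine ⟨s, ?_, hsx⟩
      have : min t₁ t₂ ≤ s := by simpa [Set.uIcc] using hs.1
      exact le_trans (le_trans (le_max_left T t₀) (le_min ht₁T ht₂T)) this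
    -- hence V is constant = Vinf between c₁ and c₂
    have hVconst : ∀ x : ℝ, c₁ < (x : EReal) → (x : EReal) < c₂ → V x = Vinf := by
      intro x hx1 hx2
      have hfr := hfreq x hx1 hx2
      exact (tendsto_nhds_unique_of_frequently_eq hlim tendsto_const_nhds
        (hfr.mono fun t ht => by rw [ht])).symm
    -- hence Ve = 0 on real points strictly between c₁ and c₂
    have hVe0 : ∀ e ∈ Set.Ioo c₁ c₂, Ve e = 0 := by
      intro e he
      induction e using EReal.rec with
      | bot => exact absurd he.1 (by simp)
      | top => exact absurd he.2 (by simp)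
      | coe x =>
        have hxJ : x ∈ J := by
          rw [hJ]
          exact ⟨lt_of_le_of_lt h1I.1 he.1, lt_of_lt_of_le he.2 h2I.2⟩
        rw [hVe_eq x hxJ]
        have hO : IsOpen {y : ℝ | c₁ < (y : EReal) ∧ (y : EReal) < c₂} := by
          have : Continuous (fun y : ℝ => (y : EReal)) := continuous_coe_real_ereal
          exact (isOpen_Ioo (a := c₁) (b := c₂)).preimage this
        have hxO : x ∈ {y : ℝ | c₁ < (y : EReal) ∧ (y : EReal) < c₂} := ⟨he.1, he.2⟩
        have hev : V =ᶠ[nhds x] fun _ => Vinf := by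
          filter_upwards [hO.mem_nhds hxO] with y hy
          exact hVconst y hy.1 hy.2
        have : deriv V x = deriv (fun _ : ℝ => Vinf) x := hev.deriv_eq
        rw [this, deriv_const]
        norm_num
    -- conclude Ve c₁ = 0 by continuity
    have hIooSub : Set.Ioo c₁ c₂ ⊆ Set.Icc a b := fun e he =>
      ⟨le_trans h1I.1 (le_of_lt he.1), le_trans (le_of_lt he.2) h2I.2⟩
    have hclos : c₁ ∈ closure (Set.Ioo c₁ c₂) := by
      rw [closure_Ioo (ne_of_lt h12)]
      exact Set.left_mem_Icc.mpr (le_of_lt h12)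
    have hne : (nhdsWithin c₁ (Set.Ioo c₁ c₂)).NeBot :=
      mem_closure_iff_nhdsWithin_neBot.mp hclos
    have hT1 : Tendsto Ve (nhdsWithin c₁ (Set.Ioo c₁ c₂)) (nhds (Ve c₁)) :=
      (hVe_cont c₁ h1I).mono_left (nhdsWithin_mono _ hIooSub)
    have hT2 : Tendsto Ve (nhdsWithin c₁ (Set.Ioo c₁ c₂)) (nhds 0) := by
      apply Tendsto.congr' _ tendsto_const_nhds
      filter_upwards [eventually_mem_nhdsWithin] with e he
      exact (hVe0 e he).symm
    refine ⟨tendsto_nhds_unique hT1 hT2, ?_⟩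
    have hclos' : c₂ ∈ closure (Set.Ioo c₁ c₂) := by
      rw [closure_Ioo (ne_of_lt h12)]
      exact Set.right_mem_Icc.mpr (le_of_lt h12)
    have hne' : (nhdsWithin c₂ (Set.Ioo c₁ c₂)).NeBot :=
      mem_closure_iff_nhdsWithin_neBot.mp hclos'
    have hT1' : Tendsto Ve (nhdsWithin c₂ (Set.Ioo c₁ c₂)) (nhds (Ve c₂)) :=
      (hVe_cont c₂ h2I).mono_left (nhdsWithin_mono _ hIooSub)
    have hT2' : Tendsto Ve (nhdsWithin c₂ (Set.Ioo c₁ c₂)) (nhds 0) := by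
      apply Tendsto.congr' _ tendsto_const_nhds
      filter_upwards [eventually_mem_nhdsWithin] with e he
      exact (hVe0 e he).symm
    exact tendsto_nhds_unique hT1' hT2'
  -- uniqueness of cluster points of f
  have huniq : ∀ L L' : EReal, MapClusterPt L atTop f → MapClusterPt L' atTop f →
      L = L' := by
    intro L L' hL hL'
    obtain ⟨c, hcI, hLc, hcC⟩ := key L hL
    obtain ⟨c', hcI', hLc', hcC'⟩ := key L' hL'
    rcases lt_trichotomy c c' with h | h | h
    · obtain ⟨hz1, hz2⟩ := stepB c c' hcI hcI' hcC hcC' h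
      rw [hLc, hLc', hz1, hz2]
    · rw [hLc, hLc', h]
    · obtain ⟨hz1, hz2⟩ := stepB c' c hcI' hcI hcC' hcC h
      rw [hLc, hLc', hz1, hz2]
  -- existence of a cluster point and conclusion
  obtain ⟨L₀, hL₀⟩ := exists_clusterPt_of_compactSpace (Filter.map f atTop)
  have hL₀' : MapClusterPt L₀ atTop f := hL₀
  refine ⟨L₀, ?_⟩
  by_contra hcon
  rw [tendsto_nhds] at hcon
  push_neg at hcon
  obtain ⟨s, hso, hLs, hns⟩ := hcon
  have hfr : ∃ᶠ t in atTop, f t ∉ s := by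
    rw [Filter.not_eventually.symm]
    simpa [Filter.eventually_iff] using hns
  have hne : (atTop ⊓ Filter.principal {t | f t ∉ s}).NeBot :=
    frequently_iff_neBot.mp hfr
  obtain ⟨L', hL'⟩ :=
    exists_clusterPt_of_compactSpace (Filter.map f (atTop ⊓ Filter.principal {t | f t ∉ s}))
  have hL'cl : MapClusterPt L' atTop f :=
    hL'.mono (Filter.map_mono inf_le_left)
  have hmem : L' ∈ closure sᶜ := by
    have hle : Filter.map f (atTop ⊓ Filter.principal {t | f t ∉ s}) ≤
        Filter.principal sᶜ := by
      rw [Filter.le_principal_iff, Filter.mem_map]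
      exact Filter.mem_inf_of_right (by simp [Set.subset_def])
    exact mem_closure_iff_clusterPt.mpr (hL'.mono hle)
  rw [hso.isClosed_compl.closure_eq] at hmem
  exact hmem (huniq L' L₀ hL'cl hL₀' ▸ hLs)
end
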